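/- For γ ≥ 0 and θ ∈ ℝ, the function φ(t) = t^θ (1+|log t|)^γ is a Boyd function whose lower and upper Boyd indices both equal θ. -/
import Mathlib


open Real Set MeasureTheory
open scoped ENNReal

noncomputable def boydBar (φ : ℝ → ℝ) (t : ℝ) : ℝ :=
  sSup {x : ℝ | ∃ s : ℝ, 0 < s ∧ x = φ (t * s) / φ s}

structure IsBoyd (φ : ℝ → ℝ) : Prop where
  pos : ∀ t : ℝ, 0 < t → 0 < φ t
  one : φ 1 = 1
  cont : ContinuousOn φ (Set.Ioi 0)
  fin : ∀ t : ℝ, 0 < t → BddAbove {x : ℝ | ∃ s : ℝ, 0 < s ∧ x = φ (t * s) / φ s}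

noncomputable def lowerBoydIndex (φ : ℝ → ℝ) : ℝ :=
  sSup {x : ℝ | ∃ t ∈ Set.Ioo (0:ℝ) 1, x = Real.log (boydBar φ t) / Real.log t}

noncomputable def upperBoydIndex (φ : ℝ → ℝ) : ℝ :=
  sInf {x : ℝ | ∃ t ∈ Set.Ioi (1:ℝ), x = Real.log (boydBar φ t) / Real.log t}

section Aux

variable (γ θ : ℝ)

private noncomputable def plφ : ℝ → ℝ := fun t : ℝ => t ^ θ * (1 + |Real.log t|) ^ γ

private lemma plφ_pos {t : ℝ} (ht : 0 < t) : 0 < plφ γ θ t := by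
  have : (0:ℝ) < 1 + |Real.log t| := by positivity
  unfold plφ; positivity

private lemma plφ_one : plφ γ θ 1 = 1 := by
  simp [plφ]

private lemma plφ_submul (hγ : 0 ≤ γ) {t s : ℝ} (ht : 0 < t) (hs : 0 < s) :
    plφ γ θ (t * s) ≤ plφ γ θ t * plφ γ θ s := by
  have h1 : (1:ℝ) + |Real.log t + Real.log s| ≤ (1 + |Real.log t|) * (1 + |Real.log s|) := by
    have := abs_add_le (Real.log t) (Real.log s)
    nlinarith [abs_nonneg (Real.log t), abs_nonneg (Real.log s)]
  unfold plφ
  calc (t*s) ^ θ * (1 + |Real.log (t*s)|) ^ γ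
      = t ^ θ * s ^ θ * (1 + |Real.log t + Real.log s|) ^ γ := by
        rw [Real.mul_rpow ht.le hs.le, Real.log_mul ht.ne' hs.ne']
    _ ≤ t ^ θ * s ^ θ * ((1 + |Real.log t|) ^ γ * (1 + |Real.log s|) ^ γ) := by
        apply mul_le_mul_of_nonneg_left _ (by positivity)
        rw [← Real.mul_rpow (by positivity) (by positivity)]
        exact Real.rpow_le_rpow (by positivity) h1 hγ
    _ = (t ^ θ * (1 + |Real.log t|) ^ γ) * (s ^ θ * (1 + |Real.log s|) ^ γ) := by ring

private lemma plφ_isGreatest (hγ : 0 ≤ γ) {t : ℝ} (ht : 0 < t) :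
    IsGreatest {x : ℝ | ∃ s : ℝ, 0 < s ∧ x = plφ γ θ (t * s) / plφ γ θ s} (plφ γ θ t) := by
  constructor
  · exact ⟨1, one_pos, by rw [mul_one, plφ_one, div_one]⟩
  · rintro x ⟨s, hs, rfl⟩
    rw [div_le_iff₀ (plφ_pos γ θ hs)]
    exact plφ_submul γ θ hγ ht hs

private lemma boydBar_plφ (hγ : 0 ≤ γ) {t : ℝ} (ht : 0 < t) :
    boydBar (plφ γ θ) t = plφ γ θ t :=
  (plφ_isGreatest γ θ hγ ht).csSup_eq

private lemma log_plφ {t : ℝ} (ht : 0 < t) :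
    Real.log (plφ γ θ t) = θ * Real.log t + γ * Real.log (1 + |Real.log t|) := by
  have h1 : (0:ℝ) < 1 + |Real.log t| := by positivity
  unfold plφ
  rw [Real.log_mul (by positivity) (by positivity), Real.log_rpow ht, Real.log_rpow h1]

private lemma ratio_eq (hγ : 0 ≤ γ) {t : ℝ} (ht : 0 < t) (ht1 : t ≠ 1) :
    Real.log (boydBar (plφ γ θ) t) / Real.log t
      = θ + γ * (Real.log (1 + |Real.log t|) / Real.log t) := by
  have hlt : Real.log t ≠ 0 := Real.log_ne_zero_of_pos_of_ne_one ht ht1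
  rw [boydBar_plφ γ θ hγ ht, log_plφ]
  · field_simp
  · exact ht

private lemma tendsto_aux :
    Filter.Tendsto (fun u : ℝ => Real.log (1+u) / u) Filter.atTop (nhds 0) := by
  have h1 : (fun u : ℝ => Real.log (1+u)) =o[Filter.atTop] (fun u => 1+u) :=
    Real.isLittleO_log_id_atTop.comp_tendsto (Filter.tendsto_atTop_add_const_left _ 1 Filter.tendsto_id)
  have h2 : (fun u : ℝ => (1:ℝ)+u) =O[Filter.atTop] (fun u : ℝ => u) := by
    apply Asymptotics.IsBigO.of_bound 2
    filter_upwards [Filter.eventually_ge_atTop (1:ℝ)] with u hu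
    rw [Real.norm_eq_abs, Real.norm_eq_abs, abs_of_nonneg (by linarith : (0:ℝ) ≤ 1+u),
      abs_of_nonneg (by linarith)]
    linarith
  exact (h1.trans_isBigO h2).tendsto_div_nhds_zero

end Aux

theorem power_log_is_boyd (γ θ : ℝ) (hγ : 0 ≤ γ) :
    IsBoyd (fun t : ℝ => t ^ θ * (1 + |Real.log t|) ^ γ) ∧
      lowerBoydIndex (fun t : ℝ => t ^ θ * (1 + |Real.log t|) ^ γ) = θ ∧
      upperBoydIndex (fun t : ℝ => t ^ θ * (1 + |Real.log t|) ^ γ) = θ := by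
  have hphi : (fun t : ℝ => t ^ θ * (1 + |Real.log t|) ^ γ) = plφ γ θ := rfl
  rw [hphi]
  refine ⟨⟨fun t ht => plφ_pos γ θ ht, plφ_one γ θ, ?_,
      fun t ht => ⟨plφ γ θ t, (plφ_isGreatest γ θ hγ ht).2⟩⟩, ?_, ?_⟩
  · -- continuity
    apply ContinuousOn.mul
    · exact fun x hx => (Real.continuousAt_rpow_const x θ (Or.inl (ne_of_gt hx))).continuousWithinAt
    · intro x hx
      apply ContinuousWithinAt.rpow_const
      · exact (continuousAt_const.add
          (Real.continuousAt_log (ne_of_gt hx)).abs).continuousWithinAt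
      · left
        have : (0:ℝ) < 1 + |Real.log x| := by positivity
        exact ne_of_gt this
  · -- lower index
    unfold lowerBoydIndex
    have hset : {x : ℝ | ∃ t ∈ Set.Ioo (0:ℝ) 1, x = Real.log (boydBar (plφ γ θ) t) / Real.log t}
        = {x : ℝ | ∃ t ∈ Set.Ioo (0:ℝ) 1,
            x = θ + γ * (Real.log (1 + |Real.log t|) / Real.log t)} := by
      ext x
      constructor
      · rintro ⟨t, ht, rfl⟩
        exact ⟨t, ht, (ratio_eq γ θ hγ ht.1 (ne_of_lt ht.2)).symm ▸ rfl⟩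
      · rintro ⟨t, ht, rfl⟩
        exact ⟨t, ht, (ratio_eq γ θ hγ ht.1 (ne_of_lt ht.2)).symm⟩
    rw [hset]
    apply csSup_eq_of_forall_le_of_forall_lt_exists_gt
    · exact ⟨θ + γ * (Real.log (1 + |Real.log (1/2 : ℝ)|) / Real.log (1/2 : ℝ)),
        ⟨1/2, by norm_num, rfl⟩⟩
    · rintro x ⟨t, ht, rfl⟩
      have hlt : Real.log t < 0 := Real.log_neg ht.1 ht.2
      have hnum : 0 ≤ Real.log (1 + |Real.log t|) := by
        apply Real.log_nonneg; simp [abs_nonneg]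
      nlinarith [div_nonpos_of_nonneg_of_nonpos hnum hlt.le,
        mul_nonneg hγ (neg_nonneg.2 (div_nonpos_of_nonneg_of_nonpos hnum hlt.le))]
    · intro w hw
      -- use t = exp (-u) with u large
      have htend : Filter.Tendsto (fun u : ℝ => θ - γ * (Real.log (1+u) / u))
          Filter.atTop (nhds θ) := by
        have := (tendsto_aux.const_mul γ).const_sub θ
        simpa using this
      have hev : ∀ᶠ u : ℝ in Filter.atTop, w < θ - γ * (Real.log (1+u) / u) :=
        htend.eventually (eventually_gt_nhds hw)
      obtain ⟨u, hwu, hu⟩ := (hev.and (Filter.eventually_gt_atTop 0)).exists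
      refine ⟨θ - γ * (Real.log (1+u) / u), ⟨Real.exp (-u), ?_, ?_⟩, hwu⟩
      · exact ⟨Real.exp_pos _, by rw [Real.exp_lt_one_iff]; linarith⟩
      · rw [Real.log_exp, abs_of_nonpos (by linarith), neg_neg, div_neg]
        ring
  · -- upper index
    unfold upperBoydIndex
    have hset : {x : ℝ | ∃ t ∈ Set.Ioi (1:ℝ), x = Real.log (boydBar (plφ γ θ) t) / Real.log t}
        = {x : ℝ | ∃ t ∈ Set.Ioi (1:ℝ),
            x = θ + γ * (Real.log (1 + |Real.log t|) / Real.log t)} := by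
      ext x
      constructor
      · rintro ⟨t, ht, rfl⟩
        exact ⟨t, ht, (ratio_eq γ θ hγ (lt_trans one_pos ht) (ne_of_gt ht)).symm ▸ rfl⟩
      · rintro ⟨t, ht, rfl⟩
        exact ⟨t, ht, (ratio_eq γ θ hγ (lt_trans one_pos ht) (ne_of_gt ht)).symm⟩
    rw [hset]
    apply csInf_eq_of_forall_ge_of_forall_gt_exists_lt
    · exact ⟨θ + γ * (Real.log (1 + |Real.log (2:ℝ)|) / Real.log (2:ℝ)),
        ⟨2, by norm_num, rfl⟩⟩
    · rintro x ⟨t, ht, rfl⟩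
      have hlt : 0 < Real.log t := Real.log_pos ht
      have hnum : 0 ≤ Real.log (1 + |Real.log t|) := by
        apply Real.log_nonneg; simp [abs_nonneg]
      nlinarith [mul_nonneg hγ (div_nonneg hnum hlt.le)]
    · intro w hw
      have htend : Filter.Tendsto (fun u : ℝ => θ + γ * (Real.log (1+u) / u))
          Filter.atTop (nhds θ) := by
        have := (tendsto_aux.const_mul γ).const_add θ
        simpa using this
      have hev : ∀ᶠ u : ℝ in Filter.atTop, θ + γ * (Real.log (1+u) / u) < w :=
        htend.eventually (eventually_lt_nhds hw)
      obtain ⟨u, hwu, hu⟩ := (hev.and (Filter.eventually_gt_atTop 0)).exists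
      refine ⟨θ + γ * (Real.log (1+u) / u), ⟨Real.exp u, ?_, ?_⟩, hwu⟩
      · rw [Set.mem_Ioi, ← Real.exp_zero, Real.exp_lt_exp]; exact hu
      · rw [Real.log_exp, abs_of_nonneg hu.le]
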